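/- A normed vector space that is uniformly uniquely geodesic (with modulus Φ < 1) has characteristic of convexity ε₀ < 2; that is, there exists ε < 2 with δ(ε) > 0. -/
import Mathlib


open Metric Set

/-- The modulus of convexity of a normed space. -/
noncomputable def modConv (X : Type*) [NormedAddCommGroup X] (ε : ℝ) : ℝ :=
  sInf {t : ℝ | ∃ x y : X, ‖x‖ ≤ 1 ∧ ‖y‖ ≤ 1 ∧ ε ≤ ‖x - y‖ ∧ t = 1 - ‖x + y‖ / 2}

/-- The characteristic of convexity of a normed space. -/
noncomputable def charConv (X : Type*) [NormedAddCommGroup X] : ℝ :=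
  sSup {ε : ℝ | ε ∈ Set.Icc 0 2 ∧ modConv X ε = 0}

/-- A normed space which is uniformly uniquely geodesic (with modulus `Φ < 1`) has
characteristic of convexity `ε₀ < 2`; that is, there exists `ε < 2` with `δ(ε) > 0`. -/
theorem uniformlyUniquelyGeodesic_charConv_lt_two {X : Type*} [NormedAddCommGroup X]
    [NormedSpace ℝ X] [Nontrivial X] (Φ : ℝ → ℝ → ℝ)
    (hΦpos : ∀ ε > (0:ℝ), ∀ b > (0:ℝ), 0 < Φ ε b)
    (hΦlt : ∀ ε > (0:ℝ), ∀ b > (0:ℝ), Φ ε b < 1)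
    (hΦ : ∀ ε > (0:ℝ), ∀ b > (0:ℝ), ∀ x y z : X,
      ∀ r₁ ∈ Set.Ioc (0:ℝ) b, ∀ r₂ ∈ Set.Ioc (0:ℝ) b,
        dist z x ≤ r₁ → dist z y ≤ r₂ + Φ ε b → r₁ + r₂ ≤ dist x y →
          Metric.infDist z (segment ℝ x y) < ε) :
    charConv X < 2 ∧ ∃ ε : ℝ, ε < 2 ∧ 0 < modConv X ε := by
  set φ := Φ (1/2) 1 with hφdef
  have hφ0 : 0 < φ := hΦpos (1/2) (by norm_num) 1 one_pos
  have hφ1 : φ < 1 := hΦlt (1/2) (by norm_num) 1 one_pos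
  -- key estimate
  have key : ∀ x y : X, ‖x‖ ≤ 1 → ‖y‖ ≤ 1 → 2 - φ ≤ ‖x - y‖ →
      (1:ℝ)/4 ≤ 1 - ‖x + y‖ / 2 := by
    intro x y hx hy hxy
    have h := hΦ (1/2) (by norm_num) 1 one_pos x y 0 1 ⟨one_pos, le_refl 1⟩ (1 - φ)
      ⟨by linarith, by linarith⟩ (by rw [dist_zero_left]; exact hx)
      (by rw [dist_zero_left]; linarith) (by rw [dist_eq_norm]; linarith)
    obtain ⟨p, hp, hdp⟩ := (Metric.infDist_lt_iff ⟨x, left_mem_segment ℝ x y⟩).mp h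
    rw [dist_zero_left] at hdp
    obtain ⟨a, b, ha, hb, hab, hpe⟩ := hp
    have hxy2 : x + y = (a • x + b • y) + (b • x + a • y) := by
      rw [add_add_add_comm, ← add_smul, ← add_smul, hab, add_comm b a, hab, one_smul, one_smul]
    have hq : ‖b • x + a • y‖ ≤ 1 := by
      calc ‖b • x + a • y‖ ≤ ‖b • x‖ + ‖a • y‖ := norm_add_le _ _
        _ = b * ‖x‖ + a * ‖y‖ := by
            rw [norm_smul, norm_smul, Real.norm_of_nonneg hb, Real.norm_of_nonneg ha]
        _ ≤ b * 1 + a * 1 := by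
            gcongr
        _ = 1 := by linarith
    have : ‖x + y‖ ≤ ‖p‖ + 1 := by
      rw [hxy2, hpe]
      calc ‖p + (b • x + a • y)‖ ≤ ‖p‖ + ‖b • x + a • y‖ := norm_add_le _ _
        _ ≤ ‖p‖ + 1 := by linarith
    linarith
  -- a unit vector
  obtain ⟨v, hv⟩ := exists_ne (0 : X)
  set u := ‖v‖⁻¹ • v with hudef
  have hu : ‖u‖ = 1 := norm_smul_inv_norm hv
  -- modConv bound
  have hbound : ∀ ε : ℝ, 2 - φ ≤ ε → ε ≤ 2 → (1:ℝ)/4 ≤ modConv X ε := by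
    intro ε hε1 hε2
    apply le_csInf
    · refine ⟨1, u, -u, le_of_eq hu, by simpa using le_of_eq hu, ?_, by simp⟩
      have : u - -u = (2:ℝ) • u := by
        rw [sub_neg_eq_add, two_smul]
      rw [this, norm_smul, hu]
      simpa using hε2
    · rintro t ⟨x, y, hx, hy, hxy, ht⟩
      rw [ht]
      exact key x y hx hy (le_trans hε1 hxy)
  have hmod : 0 < modConv X (2 - φ) :=
    lt_of_lt_of_le (by norm_num) (hbound (2 - φ) le_rfl (by linarith))
  have hchar : charConv X ≤ 2 - φ := by
    apply Real.sSup_le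
    · rintro ε ⟨⟨hε0, hε2⟩, hεm⟩
      by_contra hlt
      push_neg at hlt
      have := hbound ε hlt.le hε2
      linarith
    · linarith
  exact ⟨by linarith, 2 - φ, by linarith, hmod⟩
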